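/- Let a > 0, λ > 0, x > 0, and suppose λ ≤ a²/(2(a+1)). Define f(y) = (1/2)(y − x)² + λ(a+1)y/(a+y) for y ≥ 0. Then f''(y) = 1 − 2λa(a+1)/(a+y)³ is nonnegative for all y ≥ 0, so f is convex on [0,∞), and f'(0) = λ(a+1)/a − x; consequently if 0 ≤ x ≤ λ(a+1)/a then y = 0 is the minimizer of f on [0,∞). -/

import Mathlib

/-- For `a > 0`, `0 < λ ≤ a²/(2(a+1))`, `x > 0`, and
`f(y) = (1/2)(y − x)² + λ(a+1)y/(a+y)` on `[0,∞)`: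
the second derivative `1 − 2λa(a+1)/(a+y)³` is nonnegative for `y ≥ 0`, `f` is
convex on `[0,∞)`, `f'(0) = λ(a+1)/a − x`, and if `x ≤ λ(a+1)/a` then `y = 0`
minimizes `f` on `[0,∞)`. -/
theorem tl1_subcritical_convex_min (a lam x : ℝ) (ha : 0 < a) (hlam : 0 < lam)
    (hsub : lam ≤ a ^ 2 / (2 * (a + 1))) (hx : 0 < x) :
    (∀ y : ℝ, 0 ≤ y → 0 ≤ 1 - 2 * lam * a * (a + 1) / (a + y) ^ 3) ∧
      ConvexOn ℝ (Set.Ici 0)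
        (fun y : ℝ => (1 / 2) * (y - x) ^ 2 + lam * ((a + 1) * y / (a + y))) ∧
      HasDerivAt (fun y : ℝ => (1 / 2) * (y - x) ^ 2 + lam * ((a + 1) * y / (a + y)))
        (lam * (a + 1) / a - x) 0 ∧
      (x ≤ lam * (a + 1) / a → ∀ y : ℝ, 0 ≤ y →
        (1 / 2) * ((0 : ℝ) - x) ^ 2 + lam * ((a + 1) * 0 / (a + 0)) ≤
          (1 / 2) * (y - x) ^ 2 + lam * ((a + 1) * y / (a + y))) := by
  have key : lam * (2 * (a + 1)) ≤ a ^ 2 := (le_div_iff₀ (by positivity)).mp hsub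
  set f : ℝ → ℝ := fun y => (1 / 2) * (y - x) ^ 2 + lam * ((a + 1) * y / (a + y)) with hfdef
  -- first derivative
  have hf' : ∀ y : ℝ, -a < y →
      HasDerivAt f (y - x + lam * ((a + 1) * a / (a + y) ^ 2)) y := by
    intro y hy
    have h0 : a + y ≠ 0 := by intro h; linarith [h]
    have h1 : HasDerivAt (fun y : ℝ => (1 / 2) * (y - x) ^ 2) (y - x) y := by
      have := (((hasDerivAt_id y).sub_const x).pow 2).const_mul (1 / 2 : ℝ)
      refine this.congr_deriv ?_
      simp only [id_eq]
      ring
    have hnum : HasDerivAt (fun y : ℝ => (a + 1) * y) (a + 1) y := by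
      simpa using (hasDerivAt_id y).const_mul (a + 1)
    have hden : HasDerivAt (fun y : ℝ => a + y) 1 y := by
      simpa using (hasDerivAt_id y).const_add a
    have h2 : HasDerivAt (fun y : ℝ => (a + 1) * y / (a + y)) ((a + 1) * a / (a + y) ^ 2) y := by
      have := hnum.div hden h0
      refine this.congr_deriv ?_
      field_simp
      ring
    exact h1.add (h2.const_mul lam)
  -- second derivative of the explicit first-derivative function
  set g : ℝ → ℝ := fun y => y - x + lam * ((a + 1) * a / (a + y) ^ 2) with hgdef
  have hg' : ∀ y : ℝ, -a < y →
      HasDerivAt g (1 - 2 * lam * a * (a + 1) / (a + y) ^ 3) y := by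
    intro y hy
    have h0 : a + y ≠ 0 := by intro h; linarith [h]
    have hden : HasDerivAt (fun y : ℝ => (a + y) ^ 2) (2 * (a + y)) y := by
      have := ((hasDerivAt_id y).const_add a).pow 2
      refine this.congr_deriv ?_
      simp only [id_eq]
      ring
    have hc : HasDerivAt (fun y : ℝ => (a + 1) * a / (a + y) ^ 2)
        (-(2 * a * (a + 1) / (a + y) ^ 3)) y := by
      have := (hasDerivAt_const y ((a + 1) * a)).div hden (pow_ne_zero 2 h0)
      refine this.congr_deriv ?_
      field_simp
      ring
    have := ((hasDerivAt_id y).sub_const x).add (hc.const_mul lam)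
    refine this.congr_deriv ?_
    ring
  -- part 1
  have part1 : ∀ y : ℝ, 0 ≤ y → 0 ≤ 1 - 2 * lam * a * (a + 1) / (a + y) ^ 3 := by
    intro y hy
    have hay : (0 : ℝ) < (a + y) ^ 3 := by positivity
    rw [sub_nonneg, div_le_one hay]
    nlinarith [mul_le_mul_of_nonneg_left key ha.le,
      pow_le_pow_left₀ ha.le (by linarith : a ≤ a + y) 3]
  refine ⟨part1, ?_, ?_, ?_⟩
  · -- convexity
    have hev : ∀ y : ℝ, -a < y → deriv f =ᶠ[nhds y] g :=
      fun y hy => Filter.eventuallyEq_of_mem (isOpen_Ioi.mem_nhds hy)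
        (fun z hz => (hf' z hz).deriv)
    apply convexOn_of_deriv2_nonneg (convex_Ici 0)
    · intro y hy
      exact ((hf' y (by simp at hy; linarith)).continuousAt).continuousWithinAt
    · intro y hy
      rw [interior_Ici] at hy
      exact ((hf' y (by linarith [Set.mem_Ioi.mp hy])).differentiableAt).differentiableWithinAt
    · intro y hy
      rw [interior_Ici] at hy
      have hy' : -a < y := by linarith [Set.mem_Ioi.mp hy]
      exact (((hg' y hy').differentiableAt).congr_of_eventuallyEq
        (hev y hy')).differentiableWithinAt
    · intro y hy
      rw [interior_Ici] at hy
      have hy' : -a < y := by linarith [Set.mem_Ioi.mp hy]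
      have h2 : deriv (deriv f) y = 1 - 2 * lam * a * (a + 1) / (a + y) ^ 3 := by
        rw [(hev y hy').deriv_eq]
        exact (hg' y hy').deriv
      show 0 ≤ deriv (deriv f) y
      rw [h2]
      exact part1 y (le_of_lt (Set.mem_Ioi.mp hy))
  · -- derivative at 0
    have := hf' 0 (by linarith)
    refine this.congr_deriv ?_
    field_simp
    ring
  · -- minimizer
    intro hxle y hy
    have hxa : x * a ≤ lam * (a + 1) := by
      have := (le_div_iff₀ ha).mp hxle
      linarith
    have hay : (0 : ℝ) < a + y := by linarith
    have hA : (1 / 2) * ((0 : ℝ) - x) ^ 2 + lam * ((a + 1) * 0 / (a + 0)) = x ^ 2 / 2 := by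
      field_simp
      ring
    rw [hA]
    have ht : lam * ((a + 1) * y / (a + y)) * (a + y) = lam * ((a + 1) * y) := by
      field_simp
    have hstep : x ^ 2 / 2 * (a * (a + y)) ≤
        ((1 / 2) * (y - x) ^ 2 + lam * ((a + 1) * y / (a + y))) * (a * (a + y)) := by
      nlinarith [ht, mul_le_mul_of_nonneg_right hxa (mul_nonneg hy hay.le),
        mul_le_mul_of_nonneg_right key (mul_nonneg hy hy),
        mul_nonneg (mul_nonneg ha.le hy) (mul_nonneg hy hy)]
    exact le_of_mul_le_mul_right hstep (by positivity)
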